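/- The inclusion of a connected graph Γ into its combinatorial horoball Hor(Γ) (as the level-0 vertices) is a coarse embedding: there exist functions m, M : ℝ≥0 → ℝ≥0 with m(t) → ∞ as t → ∞ such that m(d_Γ(x,y)) ≤ d_{Hor(Γ)}(x,y) ≤ M(d_Γ(x,y)) for all vertices x, y of Γ. -/

import Mathlib

/-- The combinatorial horoball over a simplicial graph `G`. -/
def SimpleGraph.horoball {V : Type*} (G : SimpleGraph V) : SimpleGraph (V × ℕ) where
  Adj x y := (x.1 = y.1 ∧ (x.2 = y.2 + 1 ∨ y.2 = x.2 + 1)) ∨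
    (x.2 = y.2 ∧ x.1 ≠ y.1 ∧ G.dist x.1 y.1 ≤ 2 ^ x.2)
  symm := by
    constructor
    rintro ⟨p, n⟩ ⟨q, m⟩ (⟨h1, h2⟩ | ⟨h1, h2, h3⟩)
    · exact Or.inl ⟨h1.symm, h2.symm⟩
    · refine Or.inr ⟨h1.symm, h2.symm, ?_⟩
      rw [G.dist_comm] at h3
      rwa [← h1]
  loopless := by
    constructor
    rintro ⟨p, n⟩ (⟨-, h⟩ | ⟨-, h, -⟩)
    · omega
    · exact h rfl


/-- The level-0 inclusion as a graph hom. -/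
def horoHom {V : Type*} (G : SimpleGraph V) : G →g G.horoball where
  toFun v := (v, 0)
  map_rel' := by
    intro a b hab
    exact Or.inr ⟨rfl, hab.ne, by simpa using G.dist_le hab.toWalk⟩

lemma horoball_walk_bound {V : Type*} (G : SimpleGraph V) (hconn : G.Connected)
    {a b : V × ℕ} (p : G.horoball.Walk a b) :
    G.dist a.1 b.1 ≤ p.length * 2 ^ (a.2 + p.length) := by
  induction p with
  | nil => simp
  | @cons a c b h q ih =>
      have key : G.dist a.1 c.1 ≤ 2 ^ a.2 ∧ c.2 ≤ a.2 + 1 := by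
        rcases h with ⟨h1, h2⟩ | ⟨h1, -, h3⟩
        · rw [h1]; simp [SimpleGraph.dist_self]; omega
        · exact ⟨h3, by omega⟩
      have tri := hconn.dist_triangle (u := a.1) (v := c.1) (w := b.1)
      have hq : G.dist c.1 b.1 ≤ q.length * 2 ^ (c.2 + q.length) := ih
      have h2 : (2:ℕ) ^ (c.2 + q.length) ≤ 2 ^ (a.2 + (q.length + 1)) :=
        Nat.pow_le_pow_right (by norm_num) (by omega)
      have h3 : (2:ℕ) ^ a.2 ≤ 2 ^ (a.2 + (q.length + 1)) :=
        Nat.pow_le_pow_right (by norm_num) (by omega)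
      calc G.dist a.1 b.1 ≤ G.dist a.1 c.1 + G.dist c.1 b.1 := tri
        _ ≤ 2 ^ (a.2 + (q.length + 1)) + q.length * 2 ^ (a.2 + (q.length + 1)) := by
            refine Nat.add_le_add (key.1.trans h3) (hq.trans ?_)
            exact Nat.mul_le_mul_left _ h2
        _ = (q.length + 1) * 2 ^ (a.2 + (q.length + 1)) := by ring
        _ = (SimpleGraph.Walk.cons h q).length * 2 ^ (a.2 + (SimpleGraph.Walk.cons h q).length) := by
            simp

/-- The inclusion of a connected graph `Γ` into its combinatorial horoball (as the
level-0 vertices) is a coarse embedding: there are `m, M : ℝ≥0 → ℝ≥0` with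
`m(t) → ∞` such that `m(d_Γ(x,y)) ≤ d_{Hor(Γ)}(x,y) ≤ M(d_Γ(x,y))` for all
vertices `x, y` of `Γ`. -/
theorem horoball_coarse_embedding {V : Type*} (G : SimpleGraph V)
    (hconn : G.Connected) :
    ∃ m M : NNReal → NNReal, Filter.Tendsto m Filter.atTop Filter.atTop ∧
      ∀ x y : V,
        m ((G.dist x y : ℕ) : NNReal) ≤ (G.horoball.dist (x, 0) (y, 0) : NNReal) ∧
        (G.horoball.dist (x, 0) (y, 0) : NNReal) ≤ M ((G.dist x y : ℕ) : NNReal) := by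
  refine ⟨fun t => ((Nat.log 4 ⌊t⌋₊ : ℕ) : NNReal), id, ?_, ?_⟩
  · have h1 : Filter.Tendsto (Nat.log 4) Filter.atTop Filter.atTop := by
      refine Filter.tendsto_atTop_atTop.2 fun b => ⟨4 ^ b, fun n hn => ?_⟩
      calc b = Nat.log 4 (4 ^ b) := (Nat.log_pow (by norm_num) b).symm
        _ ≤ Nat.log 4 n := Nat.log_mono_right hn
    exact tendsto_natCast_atTop_atTop.comp (h1.comp tendsto_nat_floor_atTop)
  · intro x y
    obtain ⟨p, hp⟩ := hconn.exists_walk_length_eq_dist x y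
    have hupper : G.horoball.dist (x, 0) (y, 0) ≤ G.dist x y := by
      have := G.horoball.dist_le (p.map (horoHom G))
      rw [SimpleGraph.Walk.length_map, hp] at this
      exact this
    constructor
    · have hreach : G.horoball.Reachable (x, 0) (y, 0) := ⟨p.map (horoHom G)⟩
      obtain ⟨q, hq⟩ := hreach.exists_walk_length_eq_dist
      set n := G.horoball.dist (x, 0) (y, 0) with hn
      have hb : G.dist x y ≤ n * 2 ^ n := by
        have := horoball_walk_bound G hconn q
        simpa [hq] using this
      have h4 : n * 2 ^ n ≤ 4 ^ n := by
        calc n * 2 ^ n ≤ 2 ^ n * 2 ^ n := Nat.mul_le_mul_right _ (Nat.lt_two_pow_self (n := n)).le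
          _ = 4 ^ n := by rw [← Nat.mul_pow]
      have hlog : Nat.log 4 (G.dist x y) ≤ n := by
        calc Nat.log 4 (G.dist x y) ≤ Nat.log 4 (4 ^ n) :=
              Nat.log_mono_right (hb.trans h4)
          _ = n := Nat.log_pow (by norm_num) n
      have hfloor : (⌊((G.dist x y : ℕ) : NNReal)⌋₊ : ℕ) = G.dist x y := Nat.floor_natCast _
      simp only [hfloor]
      exact_mod_cast hlog
    · simp only [id]
      exact_mod_cast hupper
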